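/- Let u, v : ℝ × [0,T] → ℝ be C¹ and satisfy uₜ − v vₓ = 0 and vₜ + u vₓ = 0, with u(x,0)² + v(x,0)² = 1 for all x. Then u(x,t)² + v(x,t)² = 1 for all (x,t), and consequently u satisfies the inviscid Burgers equation uₜ + u uₓ = 0. -/

import Mathlib

/-- If `uₜ − v vₓ = 0`, `vₜ + u vₓ = 0` with `u² + v² = 1` at `t = 0`, then
`u² + v² = 1` for all times, and `u` solves the inviscid Burgers equation
`uₜ + u uₓ = 0`. -/
theorem circle_ansatz_reduces_to_burgers
    (T : ℝ) (hT : 0 < T) (u v : ℝ → ℝ → ℝ)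
    (hu : ContDiff ℝ 1 fun p : ℝ × ℝ => u p.1 p.2)
    (hv : ContDiff ℝ 1 fun p : ℝ × ℝ => v p.1 p.2)
    (h1 : ∀ x : ℝ, ∀ t ∈ Set.Icc (0 : ℝ) T,
      deriv (fun s => u x s) t - v x t * deriv (fun y => v y t) x = 0)
    (h2 : ∀ x : ℝ, ∀ t ∈ Set.Icc (0 : ℝ) T,
      deriv (fun s => v x s) t + u x t * deriv (fun y => v y t) x = 0)
    (hinit : ∀ x : ℝ, (u x 0) ^ 2 + (v x 0) ^ 2 = 1) :
    (∀ x : ℝ, ∀ t ∈ Set.Icc (0 : ℝ) T, (u x t) ^ 2 + (v x t) ^ 2 = 1) ∧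
      (∀ x : ℝ, ∀ t ∈ Set.Icc (0 : ℝ) T,
        deriv (fun s => u x s) t + u x t * deriv (fun y => u y t) x = 0) := by
  have hud : Differentiable ℝ fun p : ℝ × ℝ => u p.1 p.2 := hu.differentiable one_ne_zero
  have hvd : Differentiable ℝ fun p : ℝ × ℝ => v p.1 p.2 := hv.differentiable one_ne_zero
  have hut : ∀ x, Differentiable ℝ fun s => u x s := fun x =>
    hud.comp ((differentiable_const x).prodMk differentiable_id)
  have hvt : ∀ x, Differentiable ℝ fun s => v x s := fun x =>
    hvd.comp ((differentiable_const x).prodMk differentiable_id)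
  have hux : ∀ t, Differentiable ℝ fun y => u y t := fun t =>
    hud.comp (differentiable_id.prodMk (differentiable_const t))
  have hvx : ∀ t, Differentiable ℝ fun y => v y t := fun t =>
    hvd.comp (differentiable_id.prodMk (differentiable_const t))
  have key : ∀ x : ℝ, ∀ t ∈ Set.Icc (0 : ℝ) T, (u x t) ^ 2 + (v x t) ^ 2 = 1 := by
    intro x t ht
    have hcont : ContinuousOn (fun s => (u x s) ^ 2 + (v x s) ^ 2) (Set.Icc 0 T) :=
      (((hut x).continuous.pow 2).add ((hvt x).continuous.pow 2)).continuousOn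
    have hderiv : ∀ s ∈ Set.Ico (0 : ℝ) T,
        HasDerivWithinAt (fun s => (u x s) ^ 2 + (v x s) ^ 2) 0 (Set.Ici s) s := by
      intro s hs
      have hs' : s ∈ Set.Icc (0 : ℝ) T := ⟨hs.1, hs.2.le⟩
      have h1' := h1 x s hs'
      have h2' := h2 x s hs'
      have hu' : HasDerivAt (fun s => u x s) (deriv (fun s => u x s) s) s :=
        ((hut x) s).hasDerivAt
      have hv' : HasDerivAt (fun s => v x s) (deriv (fun s => v x s) s) s :=
        ((hvt x) s).hasDerivAt
      have hE : HasDerivAt (fun s => (u x s) ^ 2 + (v x s) ^ 2)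
          ((2 : ℕ) * u x s ^ (2 - 1) * deriv (fun s => u x s) s
            + (2 : ℕ) * v x s ^ (2 - 1) * deriv (fun s => v x s) s) s :=
        (hu'.pow 2).add (hv'.pow 2)
      have hzero : (2 : ℕ) * u x s ^ (2 - 1) * deriv (fun s => u x s) s
          + (2 : ℕ) * v x s ^ (2 - 1) * deriv (fun s => v x s) s = 0 := by
        have e1 : deriv (fun s' => u x s') s = v x s * deriv (fun y => v y s) x := by
          linarith
        have e2 : deriv (fun s' => v x s') s = -(u x s * deriv (fun y => v y s) x) := by
          linarith
        rw [e1, e2]; push_cast; ring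
      rw [hzero] at hE
      exact hE.hasDerivWithinAt
    have hconst := constant_of_has_deriv_right_zero hcont hderiv t ht
    simpa [hinit x] using hconst
  refine ⟨key, ?_⟩
  intro x t ht
  have hx : HasDerivAt (fun y => (u y t) ^ 2 + (v y t) ^ 2)
      ((2 : ℕ) * u x t ^ (2 - 1) * deriv (fun y => u y t) x
        + (2 : ℕ) * v x t ^ (2 - 1) * deriv (fun y => v y t) x) x :=
    ((((hux t) x).hasDerivAt).pow 2).add ((((hvx t) x).hasDerivAt).pow 2)
  have hfun : (fun y => (u y t) ^ 2 + (v y t) ^ 2) = fun _ => (1 : ℝ) :=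
    funext fun y => key y t ht
  rw [hfun] at hx
  have hzero := hx.unique (hasDerivAt_const x 1)
  have h1' := h1 x t ht
  rw [show (2:ℕ) - 1 = 1 from rfl, pow_one, pow_one] at hzero
  push_cast at hzero
  nlinarith [hzero, h1', h2 x t ht]
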